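/- Let p(x,y) be a joint density with marginal p(y), q(x) a density mutually absolutely continuous with p(·|y), and for each x let U(x) be a random variable with E[U(x)] ≥ log q(x), defining B_U(x) = E[U(x)] − log q(x) ≥ 0. Then L := E_{x~q}[log p(x,y) − U(x)] satisfies log p(y) − L = KL(q ‖ p(·|y)) + E_{x~q}[B_U(x)]; in particular L ≤ log p(y). -/

import Mathlib

open MeasureTheory

/-- Inductive step of RAVI Theorem 4 for lower bounds: replacing `log q(x)` by a
stochastic upper bound `U(x)` gives a surrogate ELBO `L` whose gap from
`log p(y)` is `KL(q ‖ p(·|y))` plus the expected meta-inference bias. -/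
theorem ravi_surrogate_elbo_bias
    {X Y Ω : Type*} [MeasurableSpace X] [MeasurableSpace Y] [MeasurableSpace Ω]
    (μ : Measure X) (P : Measure Ω) [IsProbabilityMeasure P]
    (p : X → Y → ℝ) (y : Y) (py : ℝ) (q : X → ℝ)
    (U : X → Ω → ℝ) (BU : X → ℝ) (L : ℝ)
    (hp_nonneg : ∀ x, 0 ≤ p x y)
    (hpy : py = ∫ x, p x y ∂μ) (hpy_pos : 0 < py)
    (hq_nonneg : ∀ x, 0 ≤ q x) (hq_norm : ∫ x, q x ∂μ = 1)
    (habs : ∀ x, q x = 0 ↔ p x y = 0)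
    (hU_int : ∀ x, Integrable (U x) P)
    (hBU : ∀ x, BU x = (∫ ω, U x ω ∂P) - Real.log (q x))
    (hBU_nonneg : ∀ x, 0 ≤ BU x)
    (hL : L = ∫ x, q x * (Real.log (p x y) - ∫ ω, U x ω ∂P) ∂μ)
    (hint1 : Integrable
      (fun x => q x * (Real.log (p x y) - ∫ ω, U x ω ∂P)) μ)
    (hint2 : Integrable (fun x => q x * Real.log (q x / (p x y / py))) μ)
    (hint3 : Integrable (fun x => q x * BU x) μ) :
    Real.log py - L
        = (∫ x, q x * Real.log (q x / (p x y / py)) ∂μ)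
          + ∫ x, q x * BU x ∂μ
      ∧ L ≤ Real.log py := by
  -- q and p(·,y) are integrable since their integrals are nonzero
  have hq_int : Integrable q μ := by
    by_contra h
    rw [integral_undef h] at hq_norm
    norm_num at hq_norm
  have hp_int : Integrable (fun x => p x y) μ := by
    by_contra h
    rw [integral_undef h] at hpy
    exact absurd hpy (by linarith)
  -- pointwise identity
  have key : ∀ x, q x * Real.log py - q x * (Real.log (p x y) - ∫ ω, U x ω ∂P)
      = q x * Real.log (q x / (p x y / py)) + q x * BU x := by
    intro x
    rcases eq_or_lt_of_le (hq_nonneg x) with h0 | hqpos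
    · simp [← h0, hBU x, Real.log_zero]
    · have hq0 : q x ≠ 0 := ne_of_gt hqpos
      have hp0 : p x y ≠ 0 := fun h => hq0 ((habs x).mpr h)
      have hppos : 0 < p x y := lt_of_le_of_ne (hp_nonneg x) (Ne.symm hp0)
      rw [hBU x, Real.log_div hq0 (div_ne_zero hp0 (ne_of_gt hpy_pos)),
        Real.log_div hp0 (ne_of_gt hpy_pos)]
      ring
  -- first equation
  have hEq : Real.log py - L
      = (∫ x, q x * Real.log (q x / (p x y / py)) ∂μ)
        + ∫ x, q x * BU x ∂μ := by
    have h1 : Integrable (fun x => q x * Real.log py) μ := hq_int.mul_const _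
    calc Real.log py - L
        = (∫ x, q x * Real.log py ∂μ)
            - ∫ x, q x * (Real.log (p x y) - ∫ ω, U x ω ∂P) ∂μ := by
          rw [hL, integral_mul_const, hq_norm, one_mul]
      _ = ∫ x, q x * Real.log py
            - q x * (Real.log (p x y) - ∫ ω, U x ω ∂P) ∂μ := by
          rw [integral_sub h1 hint1]
      _ = ∫ x, q x * Real.log (q x / (p x y / py)) + q x * BU x ∂μ := by
          exact integral_congr_ae (Filter.Eventually.of_forall key)
      _ = _ := integral_add hint2 hint3
  refine ⟨hEq, ?_⟩
  -- nonnegativity of KL term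
  have hKL : 0 ≤ ∫ x, q x * Real.log (q x / (p x y / py)) ∂μ := by
    have hsub : Integrable (fun x => q x - p x y / py) μ :=
      hq_int.sub (hp_int.div_const _)
    have hle : ∀ x, q x - p x y / py ≤ q x * Real.log (q x / (p x y / py)) := by
      intro x
      rcases eq_or_lt_of_le (hq_nonneg x) with h0 | hqpos
      · have hp0 : p x y = 0 := (habs x).mp h0.symm
        simp [← h0, hp0]
      · have hq0 : q x ≠ 0 := ne_of_gt hqpos
        have hp0 : p x y ≠ 0 := fun h => hq0 ((habs x).mpr h)
        have hppos : 0 < p x y := lt_of_le_of_ne (hp_nonneg x) (Ne.symm hp0)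
        have hr : 0 < p x y / py := div_pos hppos hpy_pos
        have hlog : Real.log ((p x y / py) / q x) ≤ (p x y / py) / q x - 1 :=
          Real.log_le_sub_one_of_pos (div_pos hr hqpos)
        have : Real.log ((p x y / py) / q x) = - Real.log (q x / (p x y / py)) := by
          rw [← Real.log_inv, inv_div]
        rw [this] at hlog
        have h2 : 1 - (p x y / py) / q x ≤ Real.log (q x / (p x y / py)) := by
          linarith
        have := mul_le_mul_of_nonneg_left h2 (le_of_lt hqpos)
        calc q x - p x y / py = q x * (1 - (p x y / py) / q x) := by
              field_simp
          _ ≤ _ := this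
    calc (0 : ℝ) = (∫ x, q x ∂μ) - ∫ x, p x y / py ∂μ := by
          rw [hq_norm, integral_div, ← hpy, div_self (ne_of_gt hpy_pos)]; ring
      _ = ∫ x, q x - p x y / py ∂μ := (integral_sub hq_int (hp_int.div_const _)).symm
      _ ≤ _ := integral_mono hsub hint2 hle
  have hB : 0 ≤ ∫ x, q x * BU x ∂μ :=
    integral_nonneg fun x => mul_nonneg (hq_nonneg x) (hBU_nonneg x)
  linarith
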